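/- For n > d and arbitrary k ≥ 1, there exist homogeneous polynomials P_1,...,P_n on ℓ_1^d (defined by P_i(z) = z_i^{k(n-d+1)} for i < d and P_i(z) = z_d^k for i ≥ d) such that ‖P_1⋯P_n‖ = d^{-Σ deg(P_i)} ‖P_1‖⋯‖P_n‖, where norms are sup norms over the unit ball of ℓ_1^d. Hence the optimal constant M_n(ℓ_1^d) with ‖P_1‖⋯‖P_n‖ ≤ M_n^{Σ k_i} ‖P_1⋯P_n‖ satisfies M_n(ℓ_1^d) ≥ d. -/

import Mathlib

open Finset

/-- The sup norm of a scalar function over the closed unit ball of `ℓ_1^d`. -/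
noncomputable def supNormL1 {d : ℕ} (P : PiLp 1 (fun _ : Fin d => ℝ) → ℝ) : ℝ :=
  ⨆ z ∈ Metric.closedBall (0 : PiLp 1 (fun _ : Fin d => ℝ)) 1, |P z|

lemma supNormL1_eq {d : ℕ} (P : PiLp 1 (fun _ : Fin d => ℝ) → ℝ) (c : ℝ) (hc : 0 ≤ c)
    (hub : ∀ z ∈ Metric.closedBall (0 : PiLp 1 (fun _ : Fin d => ℝ)) 1, |P z| ≤ c)
    (hw : ∃ z ∈ Metric.closedBall (0 : PiLp 1 (fun _ : Fin d => ℝ)) 1, c ≤ |P z|) :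
    supNormL1 P = c := by
  unfold supNormL1
  apply le_antisymm
  · exact Real.iSup_le (fun z => Real.iSup_le (fun hz => hub z hz) hc) hc
  · obtain ⟨z0, hz0, hcz⟩ := hw
    refine hcz.trans ?_
    have h1 : |P z0| = ⨆ _ : z0 ∈ Metric.closedBall (0 : PiLp 1 (fun _ : Fin d => ℝ)) 1,
        |P z0| := (ciSup_pos (f := fun _ => |P z0|) hz0).symm
    rw [h1]
    apply le_ciSup (f := fun z =>
      ⨆ _ : z ∈ Metric.closedBall (0 : PiLp 1 (fun _ : Fin d => ℝ)) 1, |P z|)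
    exact ⟨c, by rintro x ⟨z, rfl⟩; exact Real.iSup_le (fun hz => hub z hz) hc⟩

lemma norm_piLp1 {d : ℕ} (z : PiLp 1 (fun _ : Fin d => ℝ)) : ‖z‖ = ∑ j, |z j| := by
  rw [PiLp.norm_eq_sum (by norm_num)]
  simp [Real.norm_eq_abs]

lemma amgm {d : ℕ} (hd : 1 ≤ d) (y : Fin d → ℝ) (hy : ∀ j, 0 ≤ y j)
    (hs : ∑ j, y j ≤ 1) : ∏ j, y j ≤ (1 / d) ^ d := by
  have hd0 : (0:ℝ) < d := by exact_mod_cast hd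
  have hkey : ∏ j, y j ^ ((1:ℝ)/d) ≤ 1 / d := by
    calc ∏ j, y j ^ ((1:ℝ)/d) ≤ ∑ j, (1/(d:ℝ)) * y j :=
          Real.geom_mean_le_arith_mean_weighted univ (fun _ => 1/(d:ℝ)) y
            (fun _ _ => by positivity)
            (by simp [Finset.sum_const, Finset.card_univ]; field_simp)
            (fun j _ => hy j)
      _ = (1/(d:ℝ)) * ∑ j, y j := by rw [Finset.mul_sum]
      _ ≤ (1/(d:ℝ)) * 1 := by
          apply mul_le_mul_of_nonneg_left hs (by positivity)
      _ = 1 / d := by ring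
  have h2 : (∏ j, y j ^ ((1:ℝ)/d)) ^ d ≤ (1/(d:ℝ)) ^ d :=
    pow_le_pow_left₀ (Finset.prod_nonneg fun j _ => Real.rpow_nonneg (hy j) _) hkey d
  calc ∏ j, y j = (∏ j, y j ^ ((1:ℝ)/d)) ^ d := by
        rw [← Finset.prod_pow]
        refine Finset.prod_congr rfl fun j _ => ?_
        rw [← Real.rpow_natCast (y j ^ ((1:ℝ)/d)) d, ← Real.rpow_mul (hy j)]
        rw [one_div, inv_mul_cancel₀ (ne_of_gt hd0), Real.rpow_one]
    _ ≤ (1/(d:ℝ)) ^ d := h2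

lemma prod_split (D n K k : ℕ) (hDn : D + 1 ≤ n) (w : ℕ → ℝ) (hK : K = k * (n - D)) :
    ∏ i ∈ range n, (if i < D then w i ^ K else w D ^ k) = ∏ j ∈ range (D + 1), w j ^ K := by
  rw [Finset.range_eq_Ico,
    ← Finset.prod_Ico_consecutive _ (Nat.zero_le D) (le_trans (Nat.le_succ D) hDn),
    Nat.Ico_zero_eq_range, Finset.prod_range_succ]
  congr 1
  · exact Finset.prod_congr rfl fun i hi => if_pos (Finset.mem_range.mp hi)
  · have h1 : ∀ i ∈ Finset.Ico D n, (if i < D then w i ^ K else w D ^ k) = w D ^ k :=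
      fun i hi => if_neg (by have := (Finset.mem_Ico.mp hi).1; omega)
    rw [Finset.prod_congr rfl h1, Finset.prod_const, Nat.card_Ico, ← pow_mul, hK]

lemma sum_split (D n K k : ℕ) (hDn : D + 1 ≤ n) (hK : K = k * (n - D)) :
    ∑ i ∈ range n, (if i < D then K else k) = (D + 1) * K := by
  rw [Finset.range_eq_Ico,
    ← Finset.sum_Ico_consecutive _ (Nat.zero_le D) (le_trans (Nat.le_succ D) hDn),
    Nat.Ico_zero_eq_range]
  have h0 : ∑ i ∈ range D, (if i < D then K else k) = D * K := by
    rw [Finset.sum_congr rfl fun i hi => if_pos (Finset.mem_range.mp hi), Finset.sum_const,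
      Finset.card_range, smul_eq_mul]
  have h1 : ∑ i ∈ Finset.Ico D n, (if i < D then K else k) = K := by
    rw [Finset.sum_congr rfl fun i hi => if_neg (by have := (Finset.mem_Ico.mp hi).1; omega),
      Finset.sum_const, Nat.card_Ico, smul_eq_mul, hK, Nat.mul_comm]
  rw [h0, h1]; ring

theorem ell1_extremal_polynomials (d n k : ℕ) (hd : 1 ≤ d) (hnd : d < n)
    (hk : 1 ≤ k)
    (P : Fin n → PiLp 1 (fun _ : Fin d => ℝ) → ℝ)
    (deg : Fin n → ℕ)
    (hdeg : ∀ i, deg i = if (i : ℕ) < d - 1 then k * (n - d + 1) else k)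
    (hP : ∀ i z, P i z =
      if h : (i : ℕ) < d - 1 then
        z ⟨(i : ℕ), lt_of_lt_of_le h (Nat.sub_le d 1)⟩ ^ (k * (n - d + 1))
      else
        z ⟨d - 1, Nat.sub_lt hd one_pos⟩ ^ k) :
    supNormL1 (fun z => ∏ i, P i z) =
      (1 / (d : ℝ) ^ (∑ i, deg i)) * ∏ i, supNormL1 (P i) ∧
    ∀ M : ℝ, 0 ≤ M →
      (∏ i, supNormL1 (P i) ≤ M ^ (∑ i, deg i) * supNormL1 (fun z => ∏ i, P i z)) →
      (d : ℝ) ≤ M := by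
  set K := k * (n - d + 1) with hKdef
  have hK1 : 1 ≤ K := Nat.one_le_iff_ne_zero.mpr (Nat.mul_ne_zero (by omega) (by omega))
  have hD : d - 1 < d := Nat.sub_lt hd one_pos
  have hd0 : (0:ℝ) < d := by exact_mod_cast hd
  have hKeq : K = k * (n - (d - 1)) := by rw [hKdef]; congr 1; omega
  -- sum of degrees
  have hsum : ∑ i, deg i = d * K := by
    have h1 : ∑ i : Fin n, deg i
        = ∑ i ∈ range n, (if i < d - 1 then K else k) := by
      rw [← Fin.sum_univ_eq_sum_range (fun i => if i < d - 1 then K else k) n]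
      exact Finset.sum_congr rfl fun i _ => hdeg i
    rw [h1, sum_split (d-1) n K k (by omega) hKeq]
    congr 1; omega
  -- each factor has sup norm 1
  have hPsup : ∀ i, supNormL1 (P i) = 1 := by
    intro i
    obtain ⟨j, m, hm, hPi⟩ : ∃ (j : Fin d) (m : ℕ), 1 ≤ m ∧ ∀ z, P i z = z j ^ m := by
      by_cases h : (i:ℕ) < d - 1
      · exact ⟨⟨(i:ℕ), lt_of_lt_of_le h (Nat.sub_le d 1)⟩, K, hK1,
          fun z => by rw [hP i z, dif_pos h]⟩
      · exact ⟨⟨d - 1, Nat.sub_lt hd one_pos⟩, k, hk, fun z => by rw [hP i z, dif_neg h]⟩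
    apply supNormL1_eq _ _ zero_le_one
    · intro z hz
      rw [hPi z, abs_pow]
      apply pow_le_one₀ (abs_nonneg _)
      calc |z j| ≤ ∑ j', |z j'| :=
            Finset.single_le_sum (f := fun j' => |z j'|) (fun _ _ => abs_nonneg _)
              (Finset.mem_univ j)
        _ = ‖z‖ := (norm_piLp1 z).symm
        _ ≤ 1 := mem_closedBall_zero_iff.mp hz
    · refine ⟨(WithLp.equiv 1 _).symm (Pi.single j 1), ?_, ?_⟩
      · rw [Metric.mem_closedBall, dist_zero_right, norm_piLp1]
        simp only [WithLp.equiv_symm_apply, PiLp.toLp_apply, Pi.single_apply, apply_ite abs, abs_one, abs_zero]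
        rw [Finset.sum_ite_eq' Finset.univ j fun _ => (1:ℝ)]
        simp
      · rw [hPi]
        simp [WithLp.equiv_symm_apply, PiLp.toLp_apply]
  have hprod1 : ∏ i, supNormL1 (P i) = 1 := Finset.prod_eq_one fun i _ => hPsup i
  -- product formula
  have hprodz : ∀ z : PiLp 1 (fun _ : Fin d => ℝ),
      ∏ i, P i z = ∏ j : Fin d, z j ^ K := by
    intro z
    set w : ℕ → ℝ := fun j =>
      z ⟨min j (d-1), lt_of_le_of_lt (min_le_right _ _) hD⟩ with hwdef
    have hw1 : ∀ (j : ℕ) (hj : j < d), w j = z ⟨j, hj⟩ := by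
      intro j hj
      simp only [hwdef]
      exact congrArg z (Fin.ext (Nat.min_eq_left (by omega)))
    have h1 : ∏ i : Fin n, P i z
        = ∏ i ∈ range n, (if i < d - 1 then w i ^ K else w (d-1) ^ k) := by
      rw [← Fin.prod_univ_eq_prod_range (fun i => if i < d - 1 then w i ^ K else w (d-1) ^ k) n]
      refine Finset.prod_congr rfl fun i _ => ?_
      rw [hP i z]
      by_cases h : (i:ℕ) < d - 1
      · rw [dif_pos h, if_pos h, hw1 (i:ℕ) (by omega)]
      · rw [dif_neg h, if_neg h, hw1 (d-1) hD]
    rw [h1, prod_split (d-1) n K k (by omega) w hKeq]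
    have hd1 : d - 1 + 1 = d := by omega
    rw [hd1, ← Fin.prod_univ_eq_prod_range (fun j => w j ^ K) d]
    exact Finset.prod_congr rfl fun j _ => by rw [hw1 (j:ℕ) j.isLt]
  -- sup norm of the product
  have hprodsup : supNormL1 (fun z => ∏ i, P i z) = (1/(d:ℝ)) ^ (d * K) := by
    apply supNormL1_eq _ _ (by positivity)
    · intro z hz
      rw [hprodz z, Finset.abs_prod]
      have h2 : ∏ j, |z j ^ K| = (∏ j, |z j|) ^ K := by
        simp_rw [abs_pow]; rw [Finset.prod_pow]
      rw [h2]
      have hsle : ∑ j, |z j| ≤ 1 := by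
        rw [← norm_piLp1 z]
        simpa [dist_zero_right] using Metric.mem_closedBall.mp hz
      calc (∏ j, |z j|) ^ K ≤ ((1/(d:ℝ)) ^ d) ^ K :=
            pow_le_pow_left₀ (Finset.prod_nonneg fun j _ => abs_nonneg _)
              (amgm hd _ (fun j => abs_nonneg _) hsle) K
        _ = (1/(d:ℝ)) ^ (d * K) := by rw [← pow_mul]
    · refine ⟨(WithLp.equiv 1 _).symm (fun _ => 1/(d:ℝ)), ?_, ?_⟩
      · rw [Metric.mem_closedBall, dist_zero_right, norm_piLp1]
        simp only [WithLp.equiv_symm_apply, PiLp.toLp_apply]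
        rw [Finset.sum_const, Finset.card_univ, Fintype.card_fin, abs_of_nonneg (by positivity),
          nsmul_eq_mul]
        rw [mul_one_div, div_self (ne_of_gt hd0)]
      · rw [hprodz]
        simp only [WithLp.equiv_symm_apply, PiLp.toLp_apply]
        rw [Finset.prod_const, Finset.card_univ, Fintype.card_fin, ← pow_mul, mul_comm K d,
          abs_of_nonneg (by positivity)]
  constructor
  · rw [hprodsup, hprod1, hsum, mul_one, one_div, one_div, inv_pow]
  · intro M hM hle
    rw [hprod1, hsum, hprodsup] at hle
    by_contra hMd
    push_neg at hMd
    have hlt : M * (1/(d:ℝ)) < 1 := by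
      rw [mul_one_div]; exact (div_lt_one hd0).mpr hMd
    have h3 : M ^ (d*K) * (1/(d:ℝ)) ^ (d*K) = (M * (1/(d:ℝ))) ^ (d*K) := (mul_pow _ _ _).symm
    have h4 : (M * (1/(d:ℝ))) ^ (d*K) < 1 :=
      pow_lt_one₀ (by positivity) hlt (Nat.mul_ne_zero (by omega) (by omega))
    rw [h3] at hle
    linarith
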